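/- Let (Z, Σ) be a measurable space, let D_1, …, D_N be probability measures on Z, let H be a nonempty finite set of hypotheses, let M > 0, and let ℓ : H × Z → [0, M] be a function measurable in its second argument. For each i ∈ {1, …, N}, let Z_{i,1}, …, Z_{i,n_i} be independent random samples with Z_{i,j} distributed according to D_i, all samples across clients being mutually independent. Let υ_1, …, υ_N be nonnegative weights and let p, q ∈ (1, ∞) satisfy 1/p + 1/q = 1 (in the paper, q = rβ). Define, for h ∈ H: the true weighted risk L_υ(h) = Σ_{i=1}^N υ_i · ∫ ℓ(h, z) dD_i(z); the empirical weighted risk L̂_υ(h) = Σ_{i=1}^N (υ_i / n_i) · Σ_{j=1}^{n_i} ℓ(h, Z_{i,j}); and the rescaled empirical risk L̃_q(h) = ( Σ_{i=1}^N [ (1/n_i) Σ_{j=1}^{n_i} ℓ(h, Z_{i,j}) ]^q )^{1/q}. Then for any δ ∈ (0, 1), with probability at least 1 − δ over the draw of all samples, for every h ∈ H: L_υ(h) ≤ ‖υ‖_p · L̃_q(h) + E[ max_{h' ∈ H} ( L_υ(h') − L̂_υ(h') ) ] + M · sqrt( ( Σ_{i=1}^N υ_i² / (2 n_i) ) ·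 log(1/δ) ), where ‖υ‖_p = ( Σ_{i=1}^N υ_i^p )^{1/p} and the expectation E is taken over an independent draw of all samples. -/

import Mathlib

open Real MeasureTheory Set

universe u


lemma hoeffding_core (p : ℝ) (hp0 : 0 ≤ p) (hp1 : p ≤ 1) (u : ℝ) :
    (1-p)*Real.exp (-p*u) + p*Real.exp ((1-p)*u) ≤ Real.exp (u^2/8) := by
  set f : ℝ → ℝ := fun v => (1-p)*Real.exp (-p*v) + p*Real.exp ((1-p)*v) with hf
  have hfpos : ∀ v, 0 < f v := by
    intro v
    rcases eq_or_lt_of_le hp1 with h1 | h1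
    · rw [hf]; rw [h1]; norm_num [Real.exp_pos]
    · have h2 : 0 < (1 - p) * Real.exp (-p*v) :=
        mul_pos (by linarith) (Real.exp_pos _)
      have h3 : 0 ≤ p * Real.exp ((1-p)*v) := mul_nonneg hp0 (Real.exp_pos _).le
      have : f v = (1-p)*Real.exp (-p*v) + p*Real.exp ((1-p)*v) := rfl
      linarith
  set f' : ℝ → ℝ := fun v => p*(1-p)*(Real.exp ((1-p)*v) - Real.exp (-p*v)) with hf'
  have d1 : ∀ v : ℝ, HasDerivAt (fun v : ℝ => -p*v) (-p) v := by
    intro v; simpa using (hasDerivAt_id v).const_mul (-p)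
  have d2 : ∀ v : ℝ, HasDerivAt (fun v : ℝ => (1-p)*v) (1-p) v := by
    intro v; simpa using (hasDerivAt_id v).const_mul (1-p)
  have hder : ∀ v, HasDerivAt f (f' v) v := by
    intro v
    have heq : f' v = (1-p)*(Real.exp (-p*v)*(-p)) + p*(Real.exp ((1-p)*v)*(1-p)) := by
      simp only [hf']; ring
    rw [hf, heq]
    exact (((d1 v).exp).const_mul (1-p)).add (((d2 v).exp).const_mul p)
  set f'' : ℝ → ℝ := fun v => p*(1-p)*((1-p)*Real.exp ((1-p)*v) + p*Real.exp (-p*v)) with hf''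
  have hder' : ∀ v, HasDerivAt f' (f'' v) v := by
    intro v
    have heq : f'' v = p*(1-p)*(Real.exp ((1-p)*v)*(1-p) - Real.exp (-p*v)*(-p)) := by
      simp only [hf'']; ring
    rw [hf', heq]
    exact (((d2 v).exp).sub ((d1 v).exp)).const_mul (p*(1-p))
  set D1 : ℝ → ℝ := fun v => v/4 - f' v / f v with hD1
  have hD1der : ∀ v, HasDerivAt D1 (1/4 - (f'' v * f v - f' v ^2) / (f v)^2) v := by
    intro v
    have h1 : HasDerivAt (fun v : ℝ => v/4) (1/4) v := by
      simpa using (hasDerivAt_id v).div_const 4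
    have h2 := ((hder' v).div (hder v) (hfpos v).ne')
    have heq : 1/4 - (f'' v * f v - f' v ^2) / (f v)^2
        = 1/4 - (f'' v * f v - f' v * f' v) / (f v)^2 := by ring
    rw [hD1, heq]
    exact h1.sub h2
  have hD1nonneg : ∀ v, 0 ≤ 1/4 - (f'' v * f v - f' v ^2) / (f v)^2 := by
    intro v
    have hA : 0 ≤ (1-p) * Real.exp (-p*v) :=
      mul_nonneg (by linarith) (Real.exp_pos _).le
    have hB : 0 ≤ p * Real.exp ((1-p)*v) := mul_nonneg hp0 (Real.exp_pos _).le
    have hfv : f v = (1-p) * Real.exp (-p*v) + p * Real.exp ((1-p)*v) := rfl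
    have key : f'' v * f v - f' v ^2
        = ((1-p) * Real.exp (-p*v)) * (p * Real.exp ((1-p)*v)) := by
      simp only [hf, hf', hf'']; ring
    rw [sub_nonneg, key, div_le_iff₀ (pow_pos (hfpos v) 2), hfv]
    nlinarith [sq_nonneg ((1-p) * Real.exp (-p*v) - p * Real.exp ((1-p)*v))]
  have hD1mono : Monotone D1 := by
    apply monotone_of_deriv_nonneg
    · exact fun v => (hD1der v).differentiableAt
    · intro v; rw [(hD1der v).deriv]; exact hD1nonneg v
  have hD10 : D1 0 = 0 := by simp [hD1, hf']
  set D : ℝ → ℝ := fun v => v^2/8 - Real.log (f v) with hD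
  have hDder : ∀ v, HasDerivAt D (D1 v) v := by
    intro v
    have h1 : HasDerivAt (fun v : ℝ => v^2/8) (v/4) v := by
      have := (hasDerivAt_pow 2 v).div_const 8
      norm_num at this
      exact this.congr_deriv (by ring)
    have h2 := (hder v).log (hfpos v).ne'
    rw [hD, hD1]
    exact h1.sub h2
  have hdiff : Differentiable ℝ D := fun v => (hDder v).differentiableAt
  have hD0 : D 0 = 0 := by
    have h1 : f 0 = 1 := by simp [hf]
    simp [hD, h1]
  have hgoal : 0 ≤ D u := by
    rcases le_total 0 u with hu | hu
    · have hmono : MonotoneOn D (Set.Ici 0) := by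
        apply monotoneOn_of_deriv_nonneg (convex_Ici 0) hdiff.continuous.continuousOn
          (fun v _ => (hdiff v).differentiableWithinAt)
        intro v hv
        rw [(hDder v).deriv]
        rw [interior_Ici] at hv
        have := hD1mono (le_of_lt hv)
        rw [hD10] at this; exact this
      have := hmono (Set.self_mem_Ici) (Set.mem_Ici.2 hu) hu
      rw [hD0] at this; exact this
    · have hmono : AntitoneOn D (Set.Iic 0) := by
        apply antitoneOn_of_deriv_nonpos (convex_Iic 0) hdiff.continuous.continuousOn
          (fun v _ => (hdiff v).differentiableWithinAt)
        intro v hv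
        rw [(hDder v).deriv]
        rw [interior_Iic] at hv
        have := hD1mono (le_of_lt hv)
        rw [hD10] at this; exact this
      have := hmono (Set.mem_Iic.2 hu) (Set.self_mem_Iic) hu
      rw [hD0] at this; exact this
  have hlog : Real.log (f u) ≤ u^2/8 := by
    have : D u = u^2/8 - Real.log (f u) := rfl
    linarith [hgoal.trans_eq this.symm, this ▸ hgoal]
  calc f u = Real.exp (Real.log (f u)) := (Real.exp_log (hfpos u)).symm
    _ ≤ Real.exp (u^2/8) := Real.exp_le_exp.2 hlog


lemma integrable_of_bdd {Ω : Type*} [MeasurableSpace Ω] {μ : Measure Ω} [IsFiniteMeasure μ]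
    {g : Ω → ℝ} (hg : Measurable g) (C : ℝ) (h : ∀ ω, |g ω| ≤ C) : Integrable g μ :=
  (integrable_const C).mono' hg.aestronglyMeasurable
    (ae_of_all _ (by simpa using h))

lemma nonempty_of_prob {Ω : Type*} [MeasurableSpace Ω] (μ : Measure Ω)
    [IsProbabilityMeasure μ] : Nonempty Ω := by
  rcases isEmpty_or_nonempty Ω with h | h
  · exfalso
    have h1 : μ Set.univ = 1 := measure_univ
    rw [Set.univ_eq_empty_iff.2 h] at h1
    simp at h1
  · exact h

lemma hoeffding_mgf {Ω : Type*} [MeasurableSpace Ω] (μ : Measure Ω) [IsProbabilityMeasure μ]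
    (X : Ω → ℝ) (hX : Measurable X) (a b : ℝ) (hab : ∀ ω, X ω ∈ Set.Icc a b)
    (hmean : ∫ ω, X ω ∂μ = 0) (s : ℝ) :
    ∫ ω, Real.exp (s * X ω) ∂μ ≤ Real.exp (s^2*(b-a)^2/8) := by
  have hΩ : Nonempty Ω := nonempty_of_prob μ
  obtain ⟨ω₀⟩ := hΩ
  have hab0 : a ≤ b := le_trans (hab ω₀).1 (hab ω₀).2
  have hXint : Integrable X μ :=
    integrable_of_bdd hX (max |a| |b|) (fun ω => by
      rcases abs_le.1 (le_refl |X ω|) with _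
      have h1 := (hab ω).1; have h2 := (hab ω).2
      rw [abs_le]
      constructor
      · calc -(max |a| |b|) ≤ -|a| := by simp [neg_le_neg_iff]
          _ ≤ a := neg_abs_le a
          _ ≤ X ω := h1
      · calc X ω ≤ b := h2
          _ ≤ |b| := le_abs_self b
          _ ≤ max |a| |b| := le_max_right _ _)
  -- a ≤ 0 ≤ b
  have ha0 : a ≤ 0 := by
    have : a ≤ ∫ ω, X ω ∂μ := by
      rw [show a = ∫ _ : Ω, a ∂μ by simp]
      exact integral_mono (integrable_const a) hXint (fun ω => (hab ω).1)
    rwa [hmean] at this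
  have hb0 : 0 ≤ b := by
    have : (∫ ω, X ω ∂μ) ≤ b := by
      rw [show b = ∫ _ : Ω, b ∂μ by simp]
      exact integral_mono hXint (integrable_const b) (fun ω => (hab ω).2)
    rwa [hmean] at this
  rcases eq_or_lt_of_le hab0 with he | hlt
  · -- a = b, so a = b = 0 and X = 0
    have ha : a = 0 := le_antisymm ha0 (he ▸ hb0)
    have hb : b = 0 := by rw [← he]; exact ha
    have hXz : ∀ ω, X ω = 0 := fun ω => le_antisymm (hb ▸ (hab ω).2) (ha ▸ (hab ω).1)
    simp only [hXz, mul_zero, Real.exp_zero, integral_const, measure_univ,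
      ENNReal.toReal_one, smul_eq_mul, one_mul, probReal_univ]
    exact Real.one_le_exp (by positivity)
  · -- a < b
    set pp : ℝ := -a/(b-a) with hpp
    have hba : (0:ℝ) < b - a := by linarith
    have hpp0 : 0 ≤ pp := by
      apply div_nonneg (by linarith) hba.le
    have hpp1 : pp ≤ 1 := by
      rw [div_le_one hba]; linarith
    set u : ℝ := s * (b-a) with hu
    -- pointwise convexity bound
    have hconv : ∀ ω, Real.exp (s * X ω)
        ≤ (Real.exp (s*a)*b - Real.exp (s*b)*a)/(b-a)
          + ((Real.exp (s*b) - Real.exp (s*a))/(b-a)) * X ω := by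
      intro ω
      have h1 := (hab ω).1; have h2 := (hab ω).2
      set w1 : ℝ := (b - X ω)/(b-a) with hw1
      set w2 : ℝ := (X ω - a)/(b-a) with hw2
      have hw1n : 0 ≤ w1 := div_nonneg (by linarith) hba.le
      have hw2n : 0 ≤ w2 := div_nonneg (by linarith) hba.le
      have hwsum : w1 + w2 = 1 := by
        rw [hw1, hw2]; field_simp; ring
      have := convexOn_exp.2 (Set.mem_univ (s*a)) (Set.mem_univ (s*b)) hw1n hw2n hwsum
      simp only [smul_eq_mul] at this
      have harg : w1 * (s*a) + w2 * (s*b) = s * X ω := by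
        rw [hw1, hw2]; field_simp; ring
      rw [harg] at this
      refine this.trans_eq ?_
      rw [hw1, hw2]; field_simp; ring
    -- integrate
    have hint1 : Integrable (fun ω => Real.exp (s * X ω)) μ := by
      apply integrable_of_bdd (by fun_prop) (Real.exp (|s| * max |a| |b|))
      intro ω
      rw [abs_of_pos (Real.exp_pos _)]
      apply Real.exp_le_exp.2
      have habs : |X ω| ≤ max |a| |b| := by
        rw [abs_le]
        constructor
        · have h1 := neg_abs_le a
          have h2 := (hab ω).1
          have h3 := le_max_left |a| |b|
          linarith
        · exact (hab ω).2.trans ((le_abs_self b).trans (le_max_right _ _))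
      calc s * X ω ≤ |s * X ω| := le_abs_self _
        _ = |s| * |X ω| := abs_mul _ _
        _ ≤ |s| * max |a| |b| := mul_le_mul_of_nonneg_left habs (abs_nonneg s)
    have hint2 : Integrable (fun ω => (Real.exp (s*a)*b - Real.exp (s*b)*a)/(b-a)
        + ((Real.exp (s*b) - Real.exp (s*a))/(b-a)) * X ω) μ :=
      (integrable_const _).add (hXint.const_mul _)
    have hI : ∫ ω, Real.exp (s * X ω) ∂μ
        ≤ (Real.exp (s*a)*b - Real.exp (s*b)*a)/(b-a) := by
      calc ∫ ω, Real.exp (s * X ω) ∂μ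
          ≤ ∫ ω, ((Real.exp (s*a)*b - Real.exp (s*b)*a)/(b-a)
            + ((Real.exp (s*b) - Real.exp (s*a))/(b-a)) * X ω) ∂μ :=
            integral_mono hint1 hint2 hconv
        _ = (Real.exp (s*a)*b - Real.exp (s*b)*a)/(b-a) := by
            rw [integral_add (integrable_const _) (hXint.const_mul _),
              integral_const_mul, hmean]
            simp
    refine hI.trans ?_
    have key := hoeffding_core pp hpp0 hpp1 u
    have e1 : -pp * u = s * a := by
      rw [hpp, hu]; field_simp; try ring
    have e2 : (1-pp) * u = s * b := by
      rw [hpp, hu]; field_simp; try ring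
    rw [e1, e2] at key
    have e3 : (1 - pp) = b/(b-a) := by rw [hpp]; field_simp; try ring
    have e4 : (Real.exp (s*a)*b - Real.exp (s*b)*a)/(b-a)
        = (1-pp) * Real.exp (s*a) + pp * Real.exp (s*b) := by
      rw [e3, hpp]; field_simp; try ring
    rw [e4]
    refine key.trans ?_
    apply Real.exp_le_exp.2
    rw [hu]
    have : (s*(b-a))^2 = s^2*(b-a)^2 := by ring
    rw [this]


lemma hoeffding_osc {Ω : Type*} [MeasurableSpace Ω] (μ : Measure Ω) [IsProbabilityMeasure μ]
    (X : Ω → ℝ) (hX : Measurable X) (C : ℝ) (hosc : ∀ ω ω', X ω - X ω' ≤ C) (s : ℝ) :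
    ∫ ω, Real.exp (s * (X ω - ∫ ω', X ω' ∂μ)) ∂μ ≤ Real.exp (s^2*C^2/8) := by
  have hΩ : Nonempty Ω := nonempty_of_prob μ
  obtain ⟨ω₀⟩ := hΩ
  have hC0 : 0 ≤ C := by have := hosc ω₀ ω₀; linarith
  have hbddB : BddBelow (Set.range X) := ⟨X ω₀ - C, by
    rintro y ⟨ω, rfl⟩
    have := hosc ω₀ ω; linarith⟩
  have hbddA : BddAbove (Set.range X) := ⟨X ω₀ + C, by
    rintro y ⟨ω, rfl⟩
    have := hosc ω ω₀; linarith⟩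
  have hne : (Set.range X).Nonempty := ⟨X ω₀, ⟨ω₀, rfl⟩⟩
  set a : ℝ := sInf (Set.range X) with ha
  set b : ℝ := sSup (Set.range X) with hb
  have hXa : ∀ ω, a ≤ X ω := fun ω => csInf_le hbddB ⟨ω, rfl⟩
  have hXb : ∀ ω, X ω ≤ b := fun ω => le_csSup hbddA ⟨ω, rfl⟩
  have hba : b - a ≤ C := by
    have h1 : b ≤ a + C := by
      apply csSup_le hne
      rintro y ⟨ω, rfl⟩
      have h2 : X ω - C ≤ a := by
        apply le_csInf hne
        rintro z ⟨ω', rfl⟩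
        have := hosc ω ω'; linarith
      linarith
    linarith
  have hXint : Integrable X μ := integrable_of_bdd hX (max |a| |b|) (fun ω => by
    rw [abs_le]
    constructor
    · have h1 := neg_abs_le a
      have h2 := hXa ω
      have h3 := le_max_left |a| |b|
      linarith
    · exact (hXb ω).trans ((le_abs_self b).trans (le_max_right _ _)))
  set m : ℝ := ∫ ω', X ω' ∂μ with hm
  have key := hoeffding_mgf μ (fun ω => X ω - m) (hX.sub measurable_const) (a - m) (b - m)
    (fun ω => ⟨by have := hXa ω; simp; linarith, by have := hXb ω; simp; linarith⟩)
    (by rw [integral_sub hXint (integrable_const m)]; simp [hm])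
    s
  refine key.trans ?_
  apply Real.exp_le_exp.2
  have h1 : (b - m - (a - m)) = b - a := by ring
  rw [h1]
  have h2 : (b-a)^2 ≤ C^2 := by nlinarith [hXa ω₀, hXb ω₀]
  have h3 : 0 ≤ s^2 := sq_nonneg s
  nlinarith


lemma insertNth_update {m : ℕ} {α : Fin (m+1) → Type*} (i : Fin (m+1)) (x : α i)
    (f : ∀ j, α (i.succAbove j)) (j : Fin m) (a : α (i.succAbove j)) :
    i.insertNth x (Function.update f j a)
      = Function.update (i.insertNth x f) (i.succAbove j) a := by
  funext k
  refine Fin.succAboveCases i ?_ ?_ k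
  · rw [Fin.insertNth_apply_same,
      Function.update_of_ne (Fin.succAbove_ne i j).symm, Fin.insertNth_apply_same]
  · intro j'
    rw [Fin.insertNth_apply_succAbove]
    by_cases h : j' = j
    · subst h
      rw [Function.update_self, Function.update_self]
    · rw [Function.update_of_ne h, Function.update_of_ne
        (fun h' => h (Fin.succAbove_right_injective h')), Fin.insertNth_apply_succAbove]

lemma abs_integral_le_of_bdd {Ω : Type*} [MeasurableSpace Ω] {μ : Measure Ω}
    [IsProbabilityMeasure μ] {g : Ω → ℝ} (hg : Measurable g) (C : ℝ) (hC : ∀ ω, |g ω| ≤ C) :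
    |∫ ω, g ω ∂μ| ≤ C := by
  calc |∫ ω, g ω ∂μ| ≤ ∫ ω, |g ω| ∂μ := by
        simpa using norm_integral_le_integral_norm g
    _ ≤ ∫ _ω, C ∂μ := integral_mono (integrable_of_bdd hg C hC).abs (integrable_const C)
        (fun ω => by simpa using hC ω)
    _ = C := by simp

lemma mcdiarmid_mgf (m : ℕ) :
    ∀ (Ω : Fin m → Type u) (_inst : ∀ i, MeasurableSpace (Ω i))
      (μ : ∀ i, Measure (Ω i)) (_hprob : ∀ i, IsProbabilityMeasure (μ i))
      (f : (∀ i, Ω i) → ℝ) (_hf : Measurable f) (B : ℝ) (_hB : ∀ x, |f x| ≤ B)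
      (c : Fin m → ℝ)
      (_hc : ∀ (x : ∀ i, Ω i) (i : Fin m) (a b : Ω i),
        f (Function.update x i a) - f (Function.update x i b) ≤ c i) (s : ℝ),
    ∫ x, Real.exp (s * (f x - ∫ y, f y ∂(Measure.pi μ))) ∂(Measure.pi μ)
      ≤ Real.exp (s^2 * (∑ i, c i ^2)/8) := by
  induction m with
  | zero =>
    intro Ω inst μ hprob f hf B hB c hc s
    haveI := hprob
    haveI : IsProbabilityMeasure (Measure.pi μ) := by infer_instance
    haveI : Unique (∀ i : Fin 0, Ω i) := Pi.uniqueOfIsEmpty _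
    have hconst : ∀ x : (∀ i : Fin 0, Ω i), f x = f default :=
      fun x => congrArg f (Subsingleton.elim x default)
    have h1 : ∫ y, f y ∂(Measure.pi μ) = f default := by
      rw [show (fun y => f y) = (fun _ => f default) from funext hconst]
      simp
    simp only [h1]
    have : ∀ x : (∀ i : Fin 0, Ω i), Real.exp (s * (f x - f default)) = 1 := by
      intro x; rw [hconst x]; simp
    rw [show (fun x => Real.exp (s * (f x - f default))) = (fun _ => (1:ℝ)) from funext this]
    simp
  | succ m ih =>
    intro Ω inst μ hprob f hf B hB c hc s
    haveI := hprob
    haveI : IsProbabilityMeasure (Measure.pi μ) := by infer_instance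
    set e := MeasurableEquiv.piFinSuccAbove Ω 0 with he
    have hmp := measurePreserving_piFinSuccAbove μ 0
    set ν := Measure.pi (fun j : Fin m => μ ((0 : Fin (m+1)).succAbove j)) with hν
    haveI : IsProbabilityMeasure ν := by rw [hν]; infer_instance
    set P := (μ 0).prod ν with hP
    haveI : IsProbabilityMeasure P := by rw [hP]; infer_instance
    set F : (Ω 0 × ∀ j, Ω ((0 : Fin (m+1)).succAbove j)) → ℝ := fun y => f (e.symm y) with hF
    have hFmeas : Measurable F := hf.comp e.symm.measurable
    have hFsymm : ∀ x t, F (x, t) = f (Fin.insertNth 0 x t) := fun x t => rfl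
    have hFbdd : ∀ y, |F y| ≤ B := fun y => hB _
    set G : (∀ j, Ω ((0 : Fin (m+1)).succAbove j)) → ℝ := fun t => ∫ x, F (x, t) ∂(μ 0) with hG
    have hGmeas : Measurable G := by
      have := hFmeas.stronglyMeasurable.integral_prod_left' (μ := μ 0)
      exact this.measurable
    have hGbdd : ∀ t, |G t| ≤ B := by
      intro t
      exact abs_integral_le_of_bdd
        (hFmeas.comp (measurable_id.prodMk measurable_const)) B (fun x => hFbdd _)
    have hGosc : ∀ (t : ∀ j, Ω ((0 : Fin (m+1)).succAbove j)) (j : Fin m)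
        (a b : Ω ((0 : Fin (m+1)).succAbove j)),
        G (Function.update t j a) - G (Function.update t j b) ≤ c ((0 : Fin (m+1)).succAbove j) := by
      intro t j a b
      have hint1 : Integrable (fun x => F (x, Function.update t j a)) (μ 0) :=
        integrable_of_bdd (hFmeas.comp (measurable_id.prodMk measurable_const)) B
          (fun x => hFbdd _)
      have hint2 : Integrable (fun x => F (x, Function.update t j b)) (μ 0) :=
        integrable_of_bdd (hFmeas.comp (measurable_id.prodMk measurable_const)) B
          (fun x => hFbdd _)
      rw [hG]
      simp only
      rw [← integral_sub hint1 hint2]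
      calc ∫ x, (F (x, Function.update t j a) - F (x, Function.update t j b)) ∂(μ 0)
          ≤ ∫ _x, c ((0 : Fin (m+1)).succAbove j) ∂(μ 0) := by
            apply integral_mono (hint1.sub hint2) (integrable_const _)
            intro x
            simp only [Pi.sub_apply]
            rw [hFsymm, hFsymm, insertNth_update, insertNth_update]
            exact hc _ _ _ _
        _ = c ((0 : Fin (m+1)).succAbove j) := by simp
    set I : ℝ := ∫ y, f y ∂(Measure.pi μ) with hI
    have hexp : ∀ w : ℝ, |w| ≤ B → Real.exp (s * (w - I)) ≤ Real.exp (|s| * (2*B)) := by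
      intro w hw
      apply Real.exp_le_exp.2
      have hIb : |I| ≤ B := abs_integral_le_of_bdd hf B hB
      calc s * (w - I) ≤ |s * (w - I)| := le_abs_self _
        _ = |s| * |w - I| := abs_mul _ _
        _ ≤ |s| * (2*B) := by
            apply mul_le_mul_of_nonneg_left _ (abs_nonneg s)
            calc |w - I| ≤ |w| + |I| := abs_sub _ _
              _ ≤ 2*B := by linarith
    -- transfer to product
    have step1 : ∫ x, Real.exp (s * (f x - I)) ∂(Measure.pi μ)
        = ∫ z, Real.exp (s * (F z - I)) ∂P := by
      rw [← hmp.integral_comp e.measurableEmbedding (fun z => Real.exp (s * (F z - I)))]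
      congr 1
      funext x
      rw [hF]
      simp only
      rw [e.symm_apply_apply]
    have hintF : Integrable (fun z => Real.exp (s * (F z - I))) P :=
      integrable_of_bdd (by fun_prop) (Real.exp (|s| * (2*B)))
        (fun z => by rw [abs_of_pos (Real.exp_pos _)]; exact hexp _ (hFbdd z))
    have step2 : ∫ z, Real.exp (s * (F z - I)) ∂P
        = ∫ t, ∫ x, Real.exp (s * (F (x, t) - I)) ∂(μ 0) ∂ν :=
      integral_prod_symm _ hintF
    have inner_eq : ∀ t, ∫ x, Real.exp (s * (F (x, t) - I)) ∂(μ 0)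
        = Real.exp (s * (G t - I)) * ∫ x, Real.exp (s * (F (x, t) - G t)) ∂(μ 0) := by
      intro t
      rw [← integral_const_mul]
      congr 1
      funext x
      rw [← Real.exp_add]
      congr 1
      ring
    have inner_bound : ∀ t, ∫ x, Real.exp (s * (F (x, t) - G t)) ∂(μ 0)
        ≤ Real.exp (s^2 * (c 0)^2/8) := by
      intro t
      have hXmeas : Measurable (fun x => F (x, t)) :=
        hFmeas.comp (measurable_id.prodMk measurable_const)
      have hosc : ∀ x x', F (x, t) - F (x', t) ≤ c 0 := by
        intro x x'
        rw [hFsymm, hFsymm]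
        have h3 := hc (Fin.insertNth 0 x' t) 0 x x'
        rwa [Fin.update_insertNth, Fin.update_insertNth] at h3
      have := hoeffding_osc (μ 0) (fun x => F (x, t)) hXmeas (c 0) hosc s
      exact this
    have hfP : ∫ z, F z ∂P = I := by
      rw [hI, ← hmp.integral_comp e.measurableEmbedding F]
      congr 1
      funext x
      rw [hF]
      simp only
      rw [e.symm_apply_apply]
    have hmean : ∫ t, G t ∂ν = I := by
      rw [← hfP]
      exact (integral_prod_symm F (integrable_of_bdd hFmeas B hFbdd)).symm
    -- combine
    have main : ∫ x, Real.exp (s * (f x - I)) ∂(Measure.pi μ)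
        ≤ Real.exp (s^2 * (c 0)^2/8) * ∫ t, Real.exp (s * (G t - I)) ∂ν := by
      rw [step1, step2]
      have hintG : Integrable (fun t => Real.exp (s * (G t - I))) ν :=
        integrable_of_bdd (by fun_prop) (Real.exp (|s| * (2*B)))
          (fun t => by rw [abs_of_pos (Real.exp_pos _)]; exact hexp _ (hGbdd t))
      have hintL : Integrable (fun t => ∫ x, Real.exp (s * (F (x, t) - I)) ∂(μ 0)) ν := by
        refine integrable_of_bdd ?_ (Real.exp (|s| * (2*B))) ?_
        · exact ((measurable_exp.comp ((hFmeas.sub measurable_const).const_mul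
            s)).stronglyMeasurable.integral_prod_left' (μ := μ 0)).measurable
        · intro t
          apply abs_integral_le_of_bdd (by fun_prop)
          intro x
          rw [abs_of_pos (Real.exp_pos _)]
          exact hexp _ (hFbdd _)
      calc ∫ t, ∫ x, Real.exp (s * (F (x, t) - I)) ∂(μ 0) ∂ν
          ≤ ∫ t, Real.exp (s^2 * (c 0)^2/8) * Real.exp (s * (G t - I)) ∂ν := by
            apply integral_mono hintL (hintG.const_mul _)
            intro t
            show ∫ x, Real.exp (s * (F (x, t) - I)) ∂(μ 0)
              ≤ Real.exp (s^2 * (c 0)^2/8) * Real.exp (s * (G t - I))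
            rw [inner_eq t]
            exact (mul_le_mul_of_nonneg_left (inner_bound t)
              (Real.exp_pos _).le).trans_eq (mul_comm _ _)
        _ = Real.exp (s^2 * (c 0)^2/8) * ∫ t, Real.exp (s * (G t - I)) ∂ν := by
            rw [integral_const_mul]
    have ihG := ih (fun j => Ω ((0 : Fin (m+1)).succAbove j)) (fun j => inst _)
      (fun j => μ _) (fun j => hprob _) G hGmeas B hGbdd
      (fun j => c ((0 : Fin (m+1)).succAbove j))
      (fun t j a b => hGosc t j a b) s
    rw [hmean] at ihG
    calc ∫ x, Real.exp (s * (f x - I)) ∂(Measure.pi μ)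
        ≤ Real.exp (s^2 * (c 0)^2/8) * ∫ t, Real.exp (s * (G t - I)) ∂ν := main
      _ ≤ Real.exp (s^2 * (c 0)^2/8) * Real.exp (s^2 * (∑ j, c ((0 : Fin (m+1)).succAbove j)^2)/8) := by
          apply mul_le_mul_of_nonneg_left ihG (Real.exp_pos _).le
      _ = Real.exp (s^2 * (∑ i, c i ^2)/8) := by
          rw [← Real.exp_add]
          congr 1
          rw [Fin.sum_univ_succAbove (fun i => c i ^2) 0]
          ring


lemma measurable_sigma_curry {N : ℕ} {n : Fin N → ℕ} {Z : Type*} [MeasurableSpace Z] :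
    Measurable (Sigma.curry (γ := fun (i : Fin N) (_ : Fin (n i)) => Z)) :=
  measurable_pi_lambda _ (fun i => measurable_pi_lambda _ (fun j =>
    (measurable_pi_apply (⟨i, j⟩ : Σ i : Fin N, Fin (n i)) : _)))

lemma measurePreserving_sigma_curry {N : ℕ} (n : Fin N → ℕ) {Z : Type*} [MeasurableSpace Z]
    (D : Fin N → Measure Z) [∀ i, IsProbabilityMeasure (D i)] :
    MeasurePreserving
      (Sigma.curry (γ := fun (i : Fin N) (_ : Fin (n i)) => Z))
      (Measure.pi (fun k : Σ i : Fin N, Fin (n i) => D k.1))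
      (Measure.pi (fun i : Fin N => Measure.pi (fun _ : Fin (n i) => D i))) := by
  refine ⟨measurable_sigma_curry, ?_⟩
  set P := Measure.pi (fun k : Σ i : Fin N, Fin (n i) => D k.1) with hP
  refine (Measure.pi_eq_generateFrom
    (C := fun i => pi univ '' pi univ fun _ : Fin (n i) => { s : Set Z | MeasurableSet s })
    (fun i => generateFrom_pi) (fun i => isPiSystem_pi) (fun i => ?_) ?_).symm
  · -- finite spanning sets
    refine ⟨fun _ => univ, fun _ => ?_, fun _ => by simp, by simp [Set.iUnion_const]⟩
    exact ⟨fun _ => univ, fun _ _ => MeasurableSet.univ, by simp⟩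
  · rintro s hs
    choose t ht hteq using hs
    have htm : ∀ i j, MeasurableSet (t i j) := fun i j => ht i j (mem_univ j)
    have hsm : ∀ i, MeasurableSet (s i) := by
      intro i
      rw [← hteq i]
      exact MeasurableSet.pi countable_univ (fun j _ => htm i j)
    rw [Measure.map_apply measurable_sigma_curry
      (MeasurableSet.pi countable_univ (fun i _ => hsm i))]
    have hpre : (Sigma.curry (γ := fun (i : Fin N) (_ : Fin (n i)) => Z))
        ⁻¹' (pi univ s) = pi univ (fun k : Σ i : Fin N, Fin (n i) => t k.1 k.2) := by
      ext x
      simp only [mem_preimage, mem_pi, mem_univ, forall_true_left]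
      constructor
      · intro h k
        have := h k.1
        rw [← hteq k.1] at this
        exact this k.2 (mem_univ _)
      · intro h i
        rw [← hteq i]
        intro j _
        exact h ⟨i, j⟩
    rw [hpre, hP, Measure.pi_pi]
    have : ∀ i, (Measure.pi fun _ : Fin (n i) => D i) (s i) = ∏ j, D i (t i j) := by
      intro i
      rw [← hteq i, Measure.pi_pi]
    rw [Finset.prod_congr rfl (fun i _ => this i)]
    rw [← Finset.univ_sigma_univ, Finset.prod_sigma]



set_option maxHeartbeats 2000000 in
open MeasureTheory in
/-- Generalization bound for UDJ-FL with a specific weight vector `υ`: with probability at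
least `1 − δ` over the i.i.d. draws `Z_{i,j} ~ D_i` (modeled by the product measure `μ`),
every hypothesis `h` satisfies
`L_υ(h) ≤ ‖υ‖_p·L̃_q(h) + E[max_{h'} (L_υ(h') − L̂_υ(h'))] + M·√((Σ_i υ_i²/(2n_i))·log(1/δ))`,
where `1/p + 1/q = 1`. -/
theorem udjfl_generalization_bound
    {Z : Type*} [MeasurableSpace Z] (N : ℕ)
    (D : Fin N → Measure Z) [∀ i, IsProbabilityMeasure (D i)]
    (H : Type*) [Fintype H] [Nonempty H]
    (M : ℝ) (hM : 0 < M)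
    (ℓ : H → Z → ℝ) (hmeas : ∀ h, Measurable (ℓ h))
    (hbound : ∀ h z, ℓ h z ∈ Set.Icc (0 : ℝ) M)
    (n : Fin N → ℕ) (hn : ∀ i, 0 < n i)
    (υ : Fin N → ℝ) (hυ : ∀ i, 0 ≤ υ i)
    (p q : ℝ) (hp : 1 < p) (hq : 1 < q) (hpq : 1 / p + 1 / q = 1)
    (δ : ℝ) (hδ : δ ∈ Set.Ioo (0 : ℝ) 1)
    (μ : Measure (∀ i : Fin N, Fin (n i) → Z))
    (hμ : μ = Measure.pi fun i : Fin N => Measure.pi fun _ : Fin (n i) => D i)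
    (Ltrue : H → ℝ) (hLtrue : ∀ h, Ltrue h = ∑ i, υ i * ∫ z, ℓ h z ∂(D i))
    (Lemp : (∀ i : Fin N, Fin (n i) → Z) → H → ℝ)
    (hLemp : ∀ ω h, Lemp ω h = ∑ i, (υ i / (n i : ℝ)) * ∑ j, ℓ h (ω i j))
    (Ltilde : (∀ i : Fin N, Fin (n i) → Z) → H → ℝ)
    (hLtilde : ∀ ω h,
      Ltilde ω h = (∑ i, ((1 / (n i : ℝ)) * ∑ j, ℓ h (ω i j)) ^ q) ^ (1 / q)) :
    ENNReal.ofReal (1 - δ) ≤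
      μ {ω | ∀ h : H,
        Ltrue h ≤ (∑ i, υ i ^ p) ^ (1 / p) * Ltilde ω h
          + (∫ ω', (Finset.univ.sup' Finset.univ_nonempty
              fun h' : H => Ltrue h' - Lemp ω' h') ∂μ)
          + M * Real.sqrt ((∑ i, υ i ^ 2 / (2 * (n i : ℝ))) * Real.log (1 / δ))} := by
  subst hμ
  -- basic facts
  have hn' : ∀ i, (0:ℝ) < (n i : ℝ) := fun i => by exact_mod_cast hn i
  set g : (∀ i : Fin N, Fin (n i) → Z) → ℝ :=
    fun ω => Finset.univ.sup' Finset.univ_nonempty fun h' : H => Ltrue h' - Lemp ω h' with hgdef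
  set B₀ : ℝ := ∑ i, υ i * M with hB₀
  -- measurability of Lemp and g
  have hLempMeas : ∀ h, Measurable (fun ω : ∀ i : Fin N, Fin (n i) → Z => Lemp ω h) := by
    intro h
    have : (fun ω : ∀ i : Fin N, Fin (n i) → Z => Lemp ω h)
        = fun ω => ∑ i, (υ i / (n i : ℝ)) * ∑ j, ℓ h (ω i j) :=
      funext (fun ω => hLemp ω h)
    rw [this]
    apply Finset.measurable_sum
    intro i _
    apply Measurable.const_mul
    apply Finset.measurable_sum
    intro j _
    exact (hmeas h).comp ((measurable_pi_apply j).comp (measurable_pi_apply i))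
  have hgmeas : Measurable g := by
    have : g = Finset.univ.sup' Finset.univ_nonempty
        (fun h' : H => fun ω : ∀ i : Fin N, Fin (n i) → Z => Ltrue h' - Lemp ω h') := by
      funext ω
      rw [Finset.sup'_apply]
    rw [this]
    exact Finset.measurable_sup' _ (fun h' _ => measurable_const.sub (hLempMeas h'))
  -- bounds
  have hLtrueBnd : ∀ h, Ltrue h ∈ Set.Icc (0:ℝ) B₀ := by
    intro h
    rw [hLtrue h]
    constructor
    · apply Finset.sum_nonneg
      intro i _
      exact mul_nonneg (hυ i) (integral_nonneg (fun z => (hbound h z).1))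
    · apply Finset.sum_le_sum
      intro i _
      apply mul_le_mul_of_nonneg_left _ (hυ i)
      calc ∫ z, ℓ h z ∂(D i) ≤ ∫ _z, M ∂(D i) := by
            apply integral_mono _ (integrable_const M) (fun z => (hbound h z).2)
            exact integrable_of_bdd (hmeas h) M (fun z => by
              rcases hbound h z with ⟨h1, h2⟩
              rw [abs_le]; constructor <;> linarith)
        _ = M := by simp
  have hLempBnd : ∀ ω h, Lemp ω h ∈ Set.Icc (0:ℝ) B₀ := by
    intro ω h
    rw [hLemp ω h]
    constructor
    · apply Finset.sum_nonneg
      intro i _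
      apply mul_nonneg (div_nonneg (hυ i) (hn' i).le)
      exact Finset.sum_nonneg (fun j _ => (hbound h _).1)
    · apply Finset.sum_le_sum
      intro i _
      have hsum : ∑ j, ℓ h (ω i j) ≤ (n i : ℝ) * M := by
        calc ∑ j, ℓ h (ω i j) ≤ ∑ _j : Fin (n i), M :=
              Finset.sum_le_sum (fun j _ => (hbound h _).2)
          _ = (n i : ℝ) * M := by simp [mul_comm]
      calc (υ i / (n i : ℝ)) * ∑ j, ℓ h (ω i j)
          ≤ (υ i / (n i : ℝ)) * ((n i : ℝ) * M) :=
            mul_le_mul_of_nonneg_left hsum (div_nonneg (hυ i) (hn' i).le)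
        _ = υ i * M := by
            have hni := (hn' i).ne'
            field_simp
  have hB₀0 : 0 ≤ B₀ := Finset.sum_nonneg (fun i _ => mul_nonneg (hυ i) hM.le)
  have hgbdd : ∀ ω, |g ω| ≤ B₀ := by
    intro ω
    rw [abs_le]
    constructor
    · obtain ⟨h₀⟩ := (inferInstance : Nonempty H)
      calc -B₀ ≤ Ltrue h₀ - Lemp ω h₀ := by
            have := (hLtrueBnd h₀).1
            have := (hLempBnd ω h₀).2
            linarith
        _ ≤ g ω := by
            rw [hgdef]
            exact Finset.le_sup' (fun h' : H => Ltrue h' - Lemp ω h') (Finset.mem_univ h₀)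
    · apply Finset.sup'_le
      intro h' _
      have := (hLtrueBnd h').2
      have := (hLempBnd ω h').1
      linarith
  -- Hölder
  have hHolder : ∀ ω h, Lemp ω h ≤ (∑ i, υ i ^ p) ^ (1 / p) * Ltilde ω h := by
    intro ω h
    have hconj : p.HolderConjugate q := ⟨by rw [inv_one, ← one_div, ← one_div]; exact hpq, by linarith, by linarith⟩
    have h1 : Lemp ω h = ∑ i, υ i * ((1 / (n i : ℝ)) * ∑ j, ℓ h (ω i j)) := by
      rw [hLemp ω h]
      apply Finset.sum_congr rfl
      intro i _
      ring
    rw [h1, hLtilde ω h]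
    exact Real.inner_le_Lp_mul_Lq_of_nonneg Finset.univ hconj
      (fun i _ => hυ i)
      (fun i _ => mul_nonneg (by positivity)
        (Finset.sum_nonneg (fun j _ => (hbound h _).1)))
  set Ssum : ℝ := ∑ i, υ i ^ 2 / (2 * (n i : ℝ)) with hSsum
  set L : ℝ := Real.log (1 / δ) with hLdef
  have hL : 0 < L := Real.log_pos (by rw [lt_div_iff₀ hδ.1]; simpa using hδ.2)
  set μ' := Measure.pi fun i : Fin N => Measure.pi fun _ : Fin (n i) => D i with hμ'
  haveI : IsProbabilityMeasure μ' := by rw [hμ']; infer_instance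
  set Ig : ℝ := ∫ ω', g ω' ∂μ' with hIgdef
  by_cases hz : ∀ i, υ i = 0
  · -- all weights zero
    have hT0 : ∀ h, Ltrue h = 0 := by
      intro h
      rw [hLtrue h]
      apply Finset.sum_eq_zero
      intro i _
      rw [hz i, zero_mul]
    have hE0 : ∀ ω h, Lemp ω h = 0 := by
      intro ω h
      rw [hLemp ω h]
      apply Finset.sum_eq_zero
      intro i _
      rw [hz i, zero_div, zero_mul]
    have hguniv : ∀ ω, g ω = 0 := by
      intro ω
      rw [hgdef]
      have : (fun h' : H => Ltrue h' - Lemp ω h') = fun _ => (0:ℝ) := by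
        funext h'
        rw [hT0 h', hE0 ω h', sub_zero]
      simp only [this]
      exact Finset.sup'_const _ 0
    have hIg0 : Ig = 0 := by
      rw [hIgdef]
      rw [show (fun ω' => g ω') = fun _ => (0:ℝ) from funext hguniv]
      simp
    have hset : {ω : ∀ i : Fin N, Fin (n i) → Z | ∀ h : H,
        Ltrue h ≤ (∑ i, υ i ^ p) ^ (1 / p) * Ltilde ω h + Ig + M * Real.sqrt (Ssum * L)}
        = Set.univ := by
      apply Set.eq_univ_of_forall
      intro ω h
      rw [hT0 h, hIg0]
      have h1 : 0 ≤ (∑ i, υ i ^ p) ^ (1 / p) * Ltilde ω h := by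
        apply mul_nonneg
        · apply Real.rpow_nonneg
          exact Finset.sum_nonneg (fun i _ => Real.rpow_nonneg (hυ i) p)
        · rw [hLtilde ω h]
          apply Real.rpow_nonneg
          apply Finset.sum_nonneg
          intro i _
          apply Real.rpow_nonneg
          exact mul_nonneg (by positivity) (Finset.sum_nonneg (fun j _ => (hbound h _).1))
      have h2 : 0 ≤ M * Real.sqrt (Ssum * L) := mul_nonneg hM.le (Real.sqrt_nonneg _)
      linarith
    rw [hset]
    simp only [measure_univ]
    exact ENNReal.ofReal_le_one.2 (by linarith [hδ.1])
  · -- some weight nonzero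
    push_neg at hz
    obtain ⟨i₀, hi₀⟩ := hz
    have hS : 0 < Ssum := by
      rw [hSsum]
      apply Finset.sum_pos' (fun i _ => by positivity)
      have h0 : 0 < υ i₀ := lt_of_le_of_ne (hυ i₀) (Ne.symm hi₀)
      exact ⟨i₀, Finset.mem_univ i₀, div_pos (pow_pos h0 2) (by have := hn' i₀; linarith)⟩
    set t : ℝ := M * Real.sqrt (Ssum * L) with htdef
    have ht : 0 < t := mul_pos hM (Real.sqrt_pos.2 (mul_pos hS hL))
    -- sigma setup
    set w : (Σ i : Fin N, Fin (n i)) → ℝ := fun k => υ k.1 / (n k.1 : ℝ) with hwdef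
    set c : (Σ i : Fin N, Fin (n i)) → ℝ := fun k => w k * M with hcdef
    set P := Measure.pi (fun k : Σ i : Fin N, Fin (n i) => D k.1) with hPdef
    haveI : IsProbabilityMeasure P := by rw [hPdef]; infer_instance
    have hφ := measurePreserving_sigma_curry (Z := Z) n D
    set φME : ((Σ i : Fin N, Fin (n i)) → Z) ≃ᵐ (∀ i : Fin N, Fin (n i) → Z) :=
      { toEquiv := Equiv.piCurry (fun (i : Fin N) (_ : Fin (n i)) => Z),
        measurable_toFun := measurable_sigma_curry,
        measurable_invFun := measurable_pi_lambda _
          (fun k => (measurable_pi_apply k.2).comp (measurable_pi_apply k.1)) } with hφME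
    have hφcoe : ⇑φME = Sigma.curry (γ := fun (i : Fin N) (_ : Fin (n i)) => Z) := rfl
    have hmpφ : MeasurePreserving φME P μ' := by
      rw [hφcoe] at *
      exact hφ
    set gt : ((Σ i : Fin N, Fin (n i)) → Z) → ℝ := fun x => g (Sigma.curry x) with hgtdef
    have hgtmeas : Measurable gt := hgmeas.comp measurable_sigma_curry
    have hgtbdd : ∀ x, |gt x| ≤ B₀ := fun x => hgbdd _
    have hIg : ∫ x, gt x ∂P = Ig := by
      rw [hIgdef]
      exact hmpφ.integral_comp φME.measurableEmbedding g
    -- Lemp over sigma coordinates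
    have hLempSigma : ∀ (x : (Σ i : Fin N, Fin (n i)) → Z) h,
        Lemp (Sigma.curry x) h = ∑ k : Σ i : Fin N, Fin (n i), w k * ℓ h (x k) := by
      intro x h
      rw [hLemp]
      rw [← Finset.univ_sigma_univ, Finset.sum_sigma]
      apply Finset.sum_congr rfl
      intro i _
      rw [Finset.mul_sum]
      rfl
    -- bounded differences for gt
    have hwnn : ∀ k, 0 ≤ w k := fun k => div_nonneg (hυ k.1) (hn' k.1).le
    have hgtosc : ∀ (x : (Σ i : Fin N, Fin (n i)) → Z) (k : Σ i : Fin N, Fin (n i)) (a b : Z),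
        gt (Function.update x k a) - gt (Function.update x k b) ≤ c k := by
      intro x k a b
      have hdec : ∀ (h' : H) (v : Z),
          ∑ k' : Σ i : Fin N, Fin (n i), w k' * ℓ h' (Function.update x k v k')
          = w k * ℓ h' v + ∑ k' ∈ Finset.univ.erase k, w k' * ℓ h' (x k') := by
        intro h' v
        rw [← Finset.add_sum_erase _ (fun k' => w k' * ℓ h' (Function.update x k v k'))
          (Finset.mem_univ k)]
        congr 1
        · rw [Function.update_self]
        · apply Finset.sum_congr rfl
          intro k' hk'
          rw [Function.update_of_ne (Finset.ne_of_mem_erase hk')]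
      have hLempDiff : ∀ h' : H,
          Lemp (Sigma.curry (Function.update x k b)) h'
            - Lemp (Sigma.curry (Function.update x k a)) h' ≤ c k := by
        intro h'
        rw [hLempSigma, hLempSigma, hdec h' b, hdec h' a]
        have h1 := (hbound h' b).2
        have h2 := (hbound h' a).1
        have h3 := hwnn k
        have h4 : c k = w k * M := rfl
        rw [h4]
        nlinarith [mul_le_mul_of_nonneg_left (show ℓ h' b - ℓ h' a ≤ M by linarith) h3]
      have key : g (Sigma.curry (Function.update x k a))
          ≤ g (Sigma.curry (Function.update x k b)) + c k := by
        rw [hgdef]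
        simp only
        apply Finset.sup'_le
        intro h' _
        have h1 := hLempDiff h'
        have h2 : Ltrue h' - Lemp (Sigma.curry (Function.update x k b)) h'
            ≤ Finset.univ.sup' Finset.univ_nonempty
              (fun h'' : H => Ltrue h'' - Lemp (Sigma.curry (Function.update x k b)) h'') :=
          Finset.le_sup'
            (fun h'' : H => Ltrue h'' - Lemp (Sigma.curry (Function.update x k b)) h'')
            (Finset.mem_univ h')
        linarith
      rw [hgtdef]
      simp only
      linarith
    -- transfer MGF bound through piCongrLeft
    set mm := Fintype.card (Σ i : Fin N, Fin (n i)) with hmm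
    set eF : Fin mm ≃ (Σ i : Fin N, Fin (n i)) := (Fintype.equivFin _).symm with heF
    set ψ := MeasurableEquiv.piCongrLeft (fun _ : Σ i : Fin N, Fin (n i) => Z) eF with hψdef
    have hψ : ∀ (y : Fin mm → Z) k, ψ y k = y (eF.symm k) := by
      intro y k
      show (Equiv.piCongrLeft (fun _ : Σ i : Fin N, Fin (n i) => Z) eF) y k = y (eF.symm k)
      rw [Equiv.piCongrLeft_apply]
      exact eq_rec_constant _ _
    have hmpψ := measurePreserving_piCongrLeft (μ := fun k : Σ i : Fin N, Fin (n i) => D k.1) eF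
    have hψupd : ∀ (y : Fin mm → Z) (j : Fin mm) (a : Z),
        ψ (Function.update y j a) = Function.update (ψ y) (eF j) a := by
      intro y j a
      funext k
      by_cases hk : k = eF j
      · subst hk
        rw [hψ, Function.update_self, Equiv.symm_apply_apply, Function.update_self]
      · rw [hψ, Function.update_of_ne hk, hψ, Function.update_of_ne]
        intro hh
        exact hk (by rw [← hh, Equiv.apply_symm_apply])
    set gψ : (Fin mm → Z) → ℝ := fun y => gt (ψ y) with hgψdef
    have hmgfFin := mcdiarmid_mgf mm (fun _ => Z) (fun _ => inferInstance)
      (fun j => D (eF j).1) (fun j => inferInstance) gψ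
      (hgtmeas.comp ψ.measurable) B₀ (fun y => hgtbdd _)
      (fun j => c (eF j))
      (fun y j a b => by
        rw [hgψdef]
        simp only
        rw [hψupd, hψupd]
        exact hgtosc _ _ _ _)
    -- Chernoff
    set Csum : ℝ := ∑ k : Σ i : Fin N, Fin (n i), c k ^ 2 with hCsumdef
    have hCsum : Csum = 2 * M^2 * Ssum := by
      rw [hCsumdef, hSsum, Finset.mul_sum]
      rw [← Finset.univ_sigma_univ, Finset.sum_sigma]
      apply Finset.sum_congr rfl
      intro i _
      have hni := (hn' i).ne'
      calc ∑ s : Fin (n i), c ⟨i, s⟩ ^ 2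
          = ∑ _s : Fin (n i), (υ i / (n i : ℝ) * M)^2 := rfl
        _ = (n i : ℝ) * (υ i / (n i : ℝ) * M)^2 := by
            rw [Finset.sum_const, Finset.card_univ, Fintype.card_fin, nsmul_eq_mul]
        _ = 2 * M^2 * (υ i ^ 2 / (2 * (n i : ℝ))) := by
            field_simp
    have hC0 : 0 < Csum := by rw [hCsum]; positivity
    set s : ℝ := 4 * t / Csum with hsdef
    have hs0 : 0 ≤ s := by positivity
    have hmgf : ∫ x, Real.exp (s * (gt x - Ig)) ∂P ≤ Real.exp (s^2 * Csum / 8) := by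
      have e1 : ∫ y, gψ y ∂(Measure.pi fun j => D (eF j).1) = ∫ x, gt x ∂P :=
        hmpψ.integral_comp ψ.measurableEmbedding gt
      have e2 : ∫ y, Real.exp (s * (gψ y - Ig)) ∂(Measure.pi fun j => D (eF j).1)
          = ∫ x, Real.exp (s * (gt x - Ig)) ∂P :=
        hmpψ.integral_comp ψ.measurableEmbedding (fun x => Real.exp (s * (gt x - Ig)))
      have e3 : ∑ j : Fin mm, c (eF j) ^ 2 = Csum := by
        rw [hCsumdef]
        exact Fintype.sum_equiv eF _ _ (fun j => rfl)
      have := hmgfFin s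
      rw [e1, hIg] at this
      rw [← e2]
      refine this.trans ?_
      apply Real.exp_le_exp.2
      rw [e3]
    -- numeric identity
    have hkey : Real.exp (-s * t) * Real.exp (s^2 * Csum / 8) = δ := by
      rw [← Real.exp_add]
      have ht2 : t^2 = M^2 * (Ssum * L) := by
        rw [htdef, mul_pow, Real.sq_sqrt (mul_pos hS hL).le]
      have hMS : (0:ℝ) < 2 * M^2 * Ssum := by positivity
      have harg : -s * t + s^2 * Csum / 8 = -L := by
        rw [hsdef, hCsum]
        field_simp
        nlinarith [ht2, hMS]
      rw [harg, hLdef, Real.exp_neg, Real.exp_log (one_div_pos.2 hδ.1)]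
      rw [one_div, inv_inv]
    -- tail bound
    have hXint : Integrable (fun x => Real.exp (s * (gt x - Ig))) P := by
      refine integrable_of_bdd (by fun_prop) (Real.exp (|s| * (B₀ + |Ig|))) ?_
      intro x
      rw [abs_of_pos (Real.exp_pos _)]
      apply Real.exp_le_exp.2
      calc s * (gt x - Ig) ≤ |s * (gt x - Ig)| := le_abs_self _
        _ = |s| * |gt x - Ig| := abs_mul _ _
        _ ≤ |s| * (B₀ + |Ig|) := by
            apply mul_le_mul_of_nonneg_left _ (abs_nonneg s)
            calc |gt x - Ig| ≤ |gt x| + |Ig| := abs_sub _ _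
              _ ≤ B₀ + |Ig| := by linarith [hgtbdd x]
    have htail := ProbabilityTheory.measure_ge_le_exp_mul_mgf (μ := P)
      (X := fun x => gt x - Ig) t hs0 hXint
    have hmgfeq : ProbabilityTheory.mgf (fun x => gt x - Ig) P s
        = ∫ x, Real.exp (s * (gt x - Ig)) ∂P := rfl
    rw [hmgfeq] at htail
    have htailδ : (P {x | t ≤ gt x - Ig}).toReal ≤ δ := by
      refine htail.trans ?_
      calc Real.exp (-s * t) * ∫ x, Real.exp (s * (gt x - Ig)) ∂P
          ≤ Real.exp (-s * t) * Real.exp (s^2 * Csum / 8) :=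
            mul_le_mul_of_nonneg_left hmgf (Real.exp_pos _).le
        _ = δ := hkey
    have hPδ : P {x | t ≤ gt x - Ig} ≤ ENNReal.ofReal δ := by
      rw [ENNReal.le_ofReal_iff_toReal_le (measure_ne_top P _) hδ.1.le]
      exact htailδ
    -- event algebra
    set Eset : Set (∀ i : Fin N, Fin (n i) → Z) := {ω | g ω ≤ Ig + t} with hEsetdef
    have hEmeas : MeasurableSet Eset := measurableSet_le hgmeas measurable_const
    have hcompl : μ' Esetᶜ ≤ ENNReal.ofReal δ := by
      have hmap : μ' = Measure.map φME P := hmpφ.map_eq.symm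
      rw [hmap, Measure.map_apply φME.measurable hEmeas.compl]
      refine le_trans (measure_mono ?_) hPδ
      intro x hx
      simp only [Set.mem_preimage, Set.mem_compl_iff, hEsetdef, Set.mem_setOf_eq, not_le] at hx
      simp only [Set.mem_setOf_eq]
      have : g (φME x) = gt x := rfl
      rw [this] at hx
      linarith
    have hEbound : ENNReal.ofReal (1 - δ) ≤ μ' Eset := by
      have h1 : ENNReal.ofReal (1 - δ) = 1 - ENNReal.ofReal δ := by
        rw [ENNReal.ofReal_sub 1 hδ.1.le, ENNReal.ofReal_one]
      rw [h1]
      rw [tsub_le_iff_right]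
      calc (1 : ENNReal) = μ' Set.univ := measure_univ.symm
        _ = μ' Eset + μ' Esetᶜ := (measure_add_measure_compl hEmeas).symm
        _ ≤ μ' Eset + ENNReal.ofReal δ := by gcongr
    refine hEbound.trans (measure_mono ?_)
    intro ω hω
    have hω' : g ω ≤ Ig + t := hω
    intro h
    have h1 : Ltrue h - Lemp ω h ≤ g ω := by
      rw [hgdef]
      exact Finset.le_sup' (fun h' : H => Ltrue h' - Lemp ω h') (Finset.mem_univ h)
    have h2 := hHolder ω h
    show Ltrue h ≤ (∑ i, υ i ^ p) ^ (1 / p) * Ltilde ω h + Ig + t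
    linarith
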